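/- Let p > 2 and κ > 0. There exists a constant c_0 = c_0(p,κ) > 0 such that for all vectors y, z in ℝ^n: |y+z|^p ≥ |y|^p + p|y|^(p-2)⟨y,z⟩ + ((1-κ)/2)·(p|y|^(p-2)|z|^2 + p(p-2)|w|^(p-2)(|y| - |y+z|)^2) + c_0|z|^p, where w = y if |y| ≤ |y+z| and w = (|y+z|/|y|)^(1/(p-2))·(y+z) otherwise. -/

import Mathlib

open Real Set

/-- `b ^ (e+1) = b ^ e * b` for `b ≥ 0`, `e ≥ 0`. -/
lemma my_rpow_succ {b : ℝ} (hb : 0 ≤ b) {e : ℝ} (he : 0 ≤ e) :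
    b ^ (e + 1) = b ^ e * b := by
  rcases hb.eq_or_lt with h | h
  · subst h
    rw [Real.zero_rpow (by linarith), mul_zero]
  · rw [Real.rpow_add_one h.ne']

/-- AM-GM: `x^q * (1 + q(1-x)) ≤ 1` for `0 ≤ x ≤ 1`, `q > 0`. -/
lemma my_amgm {q x : ℝ} (hq : 0 < q) (hx : 0 ≤ x) (hx1 : x ≤ 1) :
    x ^ q * (1 + q * (1 - x)) ≤ 1 := by
  have hq1 : (0:ℝ) < 1 + q := by linarith
  have hB : (0:ℝ) ≤ 1 + q * (1 - x) := by nlinarith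
  have h := Real.geom_mean_le_arith_mean2_weighted
    (w₁ := q / (1 + q)) (w₂ := 1 / (1 + q)) (p₁ := x) (p₂ := 1 + q * (1 - x))
    (by positivity) (by positivity) hx hB (by field_simp; ring)
  have hrhs : q / (1 + q) * x + 1 / (1 + q) * (1 + q * (1 - x)) = 1 := by
    field_simp; ring
  rw [hrhs] at h
  have h2 := Real.rpow_le_rpow (by positivity) h (le_of_lt hq1)
  rw [Real.one_rpow, Real.mul_rpow (by positivity) (by positivity),
    ← Real.rpow_mul hx, ← Real.rpow_mul hB,
    div_mul_cancel₀ _ hq1.ne', one_div, inv_mul_cancel₀ hq1.ne',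
    Real.rpow_one] at h2
  exact h2

/-- `x^{-q} ≥ 1 + q(1-x)` rearranged without negative powers isn't needed;
superadditivity: `1 + u^α ≤ (1+u)^α` for `α ≥ 1`, `u ≥ 0`. -/
lemma my_superadd {α u : ℝ} (hα : 1 ≤ α) (hu : 0 ≤ u) :
    1 + u ^ α ≤ (1 + u) ^ α := by
  have h1u : (0:ℝ) < 1 + u := by linarith
  have h1 : (1:ℝ) ≤ (1 + u) ^ (α - 1) :=
    Real.one_le_rpow (by linarith) (by linarith)
  have h2 : u ^ (α - 1) ≤ (1 + u) ^ (α - 1) :=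
    Real.rpow_le_rpow hu (by linarith) (by linarith)
  have h3 : (1 + u) ^ α = (1 + u) ^ (α - 1) * (1 + u) := by
    have := my_rpow_succ (le_of_lt h1u) (e := α - 1) (by linarith)
    rwa [sub_add_cancel] at this
  have h4 : u ^ α = u ^ (α - 1) * u := by
    have := my_rpow_succ hu (e := α - 1) (by linarith)
    rwa [sub_add_cancel] at this
  rw [h3, h4]
  nlinarith [mul_le_mul_of_nonneg_right h2 hu]

/-- L1 : on `[1, ∞)`. -/
lemma my_L1 {p : ℝ} (hp : 2 < p) {x : ℝ} (hx : 1 ≤ x) :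
    0 ≤ x ^ p - 1 - p / 2 * (x ^ 2 - 1) - p * (p - 2) / 2 * (x - 1) ^ 2 := by
  set f : ℝ → ℝ := fun x => x ^ p - 1 - p / 2 * (x ^ 2 - 1) - p * (p - 2) / 2 * (x - 1) ^ 2
    with hf
  have hmono : MonotoneOn f (Ici 1) := by
    have hcont : ContinuousOn f (Ici 1) := by
      have c1 : ContinuousOn (fun x : ℝ => x ^ p) (Ici 1) :=
        continuousOn_id.rpow_const (fun x _ => Or.inr (by linarith))
      exact ((c1.sub continuousOn_const).sub (continuousOn_const.mul (by fun_prop))).sub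
        (continuousOn_const.mul (by fun_prop))
    have hderiv : ∀ x ∈ interior (Ici (1:ℝ)), HasDerivAt f
        (p * x ^ (p-1) - p / 2 * (2 * x) - p * (p - 2) / 2 * (2 * (x-1))) x := by
      intro x hx
      rw [interior_Ici] at hx
      have hx0 : x ≠ 0 := ne_of_gt (lt_trans one_pos hx)
      have h1 : HasDerivAt (fun x : ℝ => x ^ p) (p * x ^ (p-1)) x :=
        Real.hasDerivAt_rpow_const (Or.inl hx0)
      have h2 : HasDerivAt (fun x : ℝ => x ^ 2 - 1) (2 * x) x := by
        simpa using ((hasDerivAt_pow 2 x).sub_const 1)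
      have h3 : HasDerivAt (fun x : ℝ => (x - 1) ^ 2) (2 * (x - 1)) x := by
        simpa using (((hasDerivAt_id x).sub_const 1).fun_pow 2)
      exact ((h1.sub_const 1).sub (h2.const_mul (p/2))).sub (h3.const_mul (p*(p-2)/2))
    apply monotoneOn_of_deriv_nonneg (convex_Ici 1) hcont
    · intro x hx
      exact ((hderiv x hx).differentiableAt).differentiableWithinAt
    · intro x hx
      rw [(hderiv x hx).deriv]
      rw [interior_Ici] at hx
      have hx' : (1:ℝ) < x := hx
      have hb : 1 + (p - 1) * (x - 1) ≤ (1 + (x - 1)) ^ (p - 1) :=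
        one_add_mul_self_le_rpow_one_add (by linarith) (by linarith)
      rw [show (1:ℝ) + (x - 1) = x by ring] at hb
      nlinarith [hb]
  have h1 : f 1 ≤ f x := hmono (by norm_num) hx hx
  simp only [hf] at h1
  norm_num [Real.one_rpow] at h1
  linarith

/-- L2 : on `[0, 1]`. -/
lemma my_L2 {p : ℝ} (hp : 2 < p) {x : ℝ} (hx0 : 0 ≤ x) (hx1 : x ≤ 1) :
    0 ≤ x ^ p - 1 - p / 2 * (x ^ 2 - 1) - p * (p - 2) / 2 * (x ^ (p-1) * (1 - x) ^ 2) := by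
  set f : ℝ → ℝ := fun x => x ^ p - 1 - p / 2 * (x ^ 2 - 1)
      - p * (p - 2) / 2 * (x ^ (p-1) * (1 - x) ^ 2) with hf
  have hanti : AntitoneOn f (Icc 0 1) := by
    have hcont : ContinuousOn f (Icc 0 1) := by
      have c1 : ContinuousOn (fun x : ℝ => x ^ p) (Icc 0 1) :=
        continuousOn_id.rpow_const (fun x _ => Or.inr (by linarith))
      have c2 : ContinuousOn (fun x : ℝ => x ^ (p-1)) (Icc 0 1) :=
        continuousOn_id.rpow_const (fun x _ => Or.inr (by linarith))
      exact ((c1.sub continuousOn_const).sub (continuousOn_const.mul (by fun_prop))).sub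
        (continuousOn_const.mul (c2.mul (by fun_prop)))
    have hderiv : ∀ x ∈ interior (Icc (0:ℝ) 1), HasDerivAt f
        (p * x ^ (p-1) - p / 2 * (2 * x) - p * (p - 2) / 2 *
          ((p-1) * x ^ (p-2) * (1-x)^2 + x ^ (p-1) * (2 * (1 - x) * (-1)))) x := by
      intro x hx
      rw [interior_Icc] at hx
      have hx0 : x ≠ 0 := ne_of_gt hx.1
      have h1 : HasDerivAt (fun x : ℝ => x ^ p) (p * x ^ (p-1)) x :=
        Real.hasDerivAt_rpow_const (Or.inl hx0)
      have h2 : HasDerivAt (fun x : ℝ => x ^ 2 - 1) (2 * x) x := by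
        simpa using ((hasDerivAt_pow 2 x).sub_const 1)
      have h3 : HasDerivAt (fun x : ℝ => x ^ (p-1)) ((p-1) * x ^ (p-2)) x := by
        have := Real.hasDerivAt_rpow_const (x := x) (p := p - 1) (Or.inl hx0)
        simpa [show p - 1 - 1 = p - 2 by ring] using this
      have h4 : HasDerivAt (fun x : ℝ => (1 - x) ^ 2) (2 * (1 - x) * (-1)) x := by
        simpa using (((hasDerivAt_const x (1:ℝ)).sub (hasDerivAt_id x)).fun_pow 2)
      exact ((h1.sub_const 1).sub (h2.const_mul (p/2))).sub
        ((h3.mul h4).const_mul (p*(p-2)/2))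
    apply antitoneOn_of_deriv_nonpos (convex_Icc 0 1) hcont
    · intro x hx
      exact ((hderiv x hx).differentiableAt).differentiableWithinAt
    · intro x hx
      rw [(hderiv x hx).deriv]
      rw [interior_Icc] at hx
      obtain ⟨hx0', hx1'⟩ := hx
      set B := x ^ (p-2) with hB
      have hBpos : 0 < B := Real.rpow_pos_of_pos hx0' _
      have hxp1 : x ^ (p-1) = B * x := by
        have := my_rpow_succ (le_of_lt hx0') (e := p - 2) (by linarith)
        rw [show p - 2 + 1 = p - 1 by ring] at this
        rw [this]
      have hkey : B * (1 + (p-2) * (1 - x)) ≤ 1 :=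
        my_amgm (by linarith) (le_of_lt hx0') (le_of_lt hx1')
      have h5 : p * (x * (B * (1 + (p-2) * (1-x)))) ≤ p * (x * 1) :=
        mul_le_mul_of_nonneg_left
          (mul_le_mul_of_nonneg_left hkey (le_of_lt hx0')) (by linarith)
      have h6 : 0 ≤ p * (p-2) * (p-1) * (B * (1-x)^2) := by
        have : (0:ℝ) < p := by linarith
        have : (0:ℝ) < p - 2 := by linarith
        have : (0:ℝ) < p - 1 := by linarith
        positivity
      rw [hxp1]
      nlinarith [h5, h6]
  have h1 : f 1 ≤ f x := hanti ⟨hx0, hx1⟩ (by norm_num) hx1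
  simp only [hf] at h1
  norm_num [Real.one_rpow] at h1
  linarith

/-- L3 : `x^p ≥ 1 + p(x-1) + (x-1)^p` on `[1, ∞)`. -/
lemma my_L3 {p : ℝ} (hp : 2 < p) {x : ℝ} (hx : 1 ≤ x) :
    1 + p * (x - 1) + (x - 1) ^ p ≤ x ^ p := by
  set f : ℝ → ℝ := fun x => x ^ p - 1 - p * (x - 1) - (x - 1) ^ p with hf
  have hmono : MonotoneOn f (Ici 1) := by
    have hcont : ContinuousOn f (Ici 1) := by
      have c1 : ContinuousOn (fun x : ℝ => x ^ p) (Ici 1) :=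
        continuousOn_id.rpow_const (fun x _ => Or.inr (by linarith))
      have c2 : ContinuousOn (fun x : ℝ => (x - 1) ^ p) (Ici 1) :=
        (continuousOn_id.sub continuousOn_const).rpow_const (fun x _ => Or.inr (by linarith))
      exact ((c1.sub continuousOn_const).sub (continuousOn_const.mul (by fun_prop))).sub c2
    have hderiv : ∀ x ∈ interior (Ici (1:ℝ)), HasDerivAt f
        (p * x ^ (p-1) - p * 1 - p * (x-1) ^ (p-1) * 1) x := by
      intro x hx
      rw [interior_Ici] at hx
      have hx' : (1:ℝ) < x := hx
      have hx0 : x ≠ 0 := ne_of_gt (lt_trans one_pos hx')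
      have h1 : HasDerivAt (fun x : ℝ => x ^ p) (p * x ^ (p-1)) x :=
        Real.hasDerivAt_rpow_const (Or.inl hx0)
      have h2 : HasDerivAt (fun x : ℝ => x - 1) 1 x := (hasDerivAt_id x).sub_const 1
      have h3 : HasDerivAt (fun x : ℝ => (x - 1) ^ p) (p * (x-1) ^ (p-1) * 1) x := by
        have := (Real.hasDerivAt_rpow_const (x := x - 1) (p := p)
          (Or.inl (sub_ne_zero.2 (by linarith)))).comp x h2
        exact this
      exact ((h1.sub_const 1).sub (h2.const_mul p)).sub h3
    apply monotoneOn_of_deriv_nonneg (convex_Ici 1) hcont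
    · intro x hx
      exact ((hderiv x hx).differentiableAt).differentiableWithinAt
    · intro x hx
      rw [(hderiv x hx).deriv]
      rw [interior_Ici] at hx
      have hx' : (1:ℝ) < x := hx
      have hs : 1 + (x - 1) ^ (p-1) ≤ (1 + (x-1)) ^ (p-1) :=
        my_superadd (by linarith) (by linarith)
      rw [show (1:ℝ) + (x - 1) = x by ring] at hs
      nlinarith [hs]
  have h1 : f 1 ≤ f x := hmono (by norm_num) hx hx
  simp only [hf] at h1
  rw [sub_self, Real.zero_rpow (by positivity : p ≠ 0), Real.one_rpow] at h1
  linarith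

/-- L4 : `x^p ≥ 1 + p(x-1) + (p/2)(1-x)^2` on `[0,1]`. -/
lemma my_L4 {p : ℝ} (hp : 2 < p) {x : ℝ} (hx0 : 0 ≤ x) (hx1 : x ≤ 1) :
    1 + p * (x - 1) + p / 2 * (1 - x) ^ 2 ≤ x ^ p := by
  set f : ℝ → ℝ := fun x => x ^ p - 1 - p * (x - 1) - p / 2 * (1 - x) ^ 2 with hf
  have hanti : AntitoneOn f (Icc 0 1) := by
    have hcont : ContinuousOn f (Icc 0 1) := by
      have c1 : ContinuousOn (fun x : ℝ => x ^ p) (Icc 0 1) :=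
        continuousOn_id.rpow_const (fun x _ => Or.inr (by linarith))
      exact ((c1.sub continuousOn_const).sub (continuousOn_const.mul (by fun_prop))).sub
        (continuousOn_const.mul (by fun_prop))
    have hderiv : ∀ x ∈ interior (Icc (0:ℝ) 1), HasDerivAt f
        (p * x ^ (p-1) - p * 1 - p / 2 * (2 * (1-x) * (-1))) x := by
      intro x hx
      rw [interior_Icc] at hx
      have h1 : HasDerivAt (fun x : ℝ => x ^ p) (p * x ^ (p-1)) x :=
        Real.hasDerivAt_rpow_const (Or.inl (ne_of_gt hx.1))
      have h2 : HasDerivAt (fun x : ℝ => x - 1) 1 x := (hasDerivAt_id x).sub_const 1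
      have h4 : HasDerivAt (fun x : ℝ => (1 - x) ^ 2) (2 * (1 - x) * (-1)) x := by
        simpa using (((hasDerivAt_const x (1:ℝ)).sub (hasDerivAt_id x)).fun_pow 2)
      exact ((h1.sub_const 1).sub (h2.const_mul p)).sub (h4.const_mul (p/2))
    apply antitoneOn_of_deriv_nonpos (convex_Icc 0 1) hcont
    · intro x hx
      exact ((hderiv x hx).differentiableAt).differentiableWithinAt
    · intro x hx
      rw [(hderiv x hx).deriv]
      rw [interior_Icc] at hx
      obtain ⟨hx0', hx1'⟩ := hx
      have h5 : x ^ (p-1) ≤ x := by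
        have := Real.rpow_le_rpow_of_exponent_ge hx0' (le_of_lt hx1')
          (by linarith : (1:ℝ) ≤ p - 1)
        rwa [Real.rpow_one] at this
      nlinarith [h5]
  have h1 : f 1 ≤ f x := hanti ⟨hx0, hx1⟩ (by norm_num) hx1
  simp only [hf] at h1
  norm_num [Real.one_rpow] at h1
  linarith

/-- powers split: `a^p = a^(p-2) * a^2` for `a ≥ 0`. -/
lemma my_split2 {p : ℝ} (hp : 2 < p) {a : ℝ} (ha : 0 ≤ a) :
    a ^ p = a ^ (p - 2) * a ^ 2 := by
  rcases ha.eq_or_lt with h | h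
  · subst h
    rw [Real.zero_rpow (by positivity : p ≠ 0), Real.zero_rpow (by intro h; linarith)]
    ring
  · rw [← Real.rpow_natCast a 2, ← Real.rpow_add h]
    norm_num

lemma my_split1 {p : ℝ} (hp : 2 < p) {a : ℝ} (ha : 0 ≤ a) :
    a ^ (p - 1) = a ^ (p - 2) * a := by
  have := my_rpow_succ ha (e := p - 2) (by linarith)
  rwa [show p - 2 + 1 = p - 1 by ring] at this

lemma my_splitp {p : ℝ} (hp : 2 < p) {a : ℝ} (ha : 0 ≤ a) :
    a ^ p = a ^ (p - 1) * a := by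
  have := my_rpow_succ ha (e := p - 1) (by linarith)
  rwa [show p - 1 + 1 = p by ring] at this

/-- Lemma A, case `a ≤ b`. -/
lemma my_lemA_le {p : ℝ} (hp : 2 < p) {a b : ℝ} (ha : 0 ≤ a) (hab : a ≤ b) :
    p / 2 * a ^ (p-2) * (b^2 - a^2) + p * (p-2) / 2 * a ^ (p-2) * (a - b)^2
      ≤ b ^ p - a ^ p := by
  have hb : 0 ≤ b := ha.trans hab
  rcases ha.eq_or_lt with h | h
  · subst h
    rw [Real.zero_rpow (by intro h; linarith : p - 2 ≠ 0),
        Real.zero_rpow (by positivity : p ≠ 0)]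
    have : 0 ≤ b ^ p := Real.rpow_nonneg hb p
    nlinarith
  · have hx1 : (1:ℝ) ≤ b / a := (one_le_div h).2 hab
    have h1 := my_L1 hp hx1
    have h2 := mul_le_mul_of_nonneg_left h1 (Real.rpow_nonneg ha p : (0:ℝ) ≤ a ^ p)
    rw [mul_zero] at h2
    have e1 : (b / a) ^ p = b ^ p / a ^ p := Real.div_rpow hb ha p
    have e2 : a ^ p = a ^ (p-2) * a ^ 2 := my_split2 hp ha
    have hap : (0:ℝ) < a ^ p := Real.rpow_pos_of_pos h p
    have hA2 : (0:ℝ) < a ^ (p-2) := Real.rpow_pos_of_pos h _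
    have key : a ^ p * ((b/a) ^ p - 1 - p / 2 * ((b/a) ^ 2 - 1)
        - p * (p - 2) / 2 * (b/a - 1) ^ 2)
        = b ^ p - a ^ p - p / 2 * a ^ (p-2) * (b^2 - a^2)
          - p * (p-2) / 2 * a ^ (p-2) * (a - b)^2 := by
      rw [e1]
      rw [show a ^ p * (b ^ p / a ^ p - 1 - p / 2 * ((b/a) ^ 2 - 1)
            - p * (p - 2) / 2 * (b/a - 1) ^ 2)
          = a ^ p * (b ^ p / a ^ p) - a ^ p - p / 2 * (a ^ p * ((b/a) ^ 2 - 1))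
            - p * (p-2) / 2 * (a ^ p * ((b/a) - 1) ^ 2) by ring]
      rw [mul_div_cancel₀ _ hap.ne']
      rw [e2]
      field_simp
      ring
    rw [key] at h2
    linarith

/-- Lemma A, case `b < a`. -/
lemma my_lemA_gt {p : ℝ} (hp : 2 < p) {a b : ℝ} (hb : 0 ≤ b) (hab : b < a) :
    p / 2 * a ^ (p-2) * (b^2 - a^2) + p * (p-2) / 2 * (b ^ (p-1) / a) * (a - b)^2
      ≤ b ^ p - a ^ p := by
  have ha : 0 < a := hb.trans_lt hab
  have hx0 : 0 ≤ b / a := by positivity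
  have hx1 : b / a ≤ 1 := by rw [div_le_one ha]; linarith
  have h1 := my_L2 hp hx0 hx1
  have h2 := mul_le_mul_of_nonneg_left h1 (Real.rpow_nonneg ha.le p : (0:ℝ) ≤ a ^ p)
  rw [mul_zero] at h2
  have e1 : (b / a) ^ p = b ^ p / a ^ p := Real.div_rpow hb ha.le p
  have e1' : (b / a) ^ (p-1) = b ^ (p-1) / a ^ (p-1) := Real.div_rpow hb ha.le (p-1)
  have e2 : a ^ p = a ^ (p-2) * a ^ 2 := my_split2 hp ha.le
  have e3 : a ^ (p-1) = a ^ (p-2) * a := my_split1 hp ha.le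
  have hap : (0:ℝ) < a ^ p := Real.rpow_pos_of_pos ha p
  have hA2 : (0:ℝ) < a ^ (p-2) := Real.rpow_pos_of_pos ha _
  have key : a ^ p * ((b/a) ^ p - 1 - p / 2 * ((b/a) ^ 2 - 1)
      - p * (p - 2) / 2 * ((b/a) ^ (p-1) * (1 - b/a) ^ 2))
      = b ^ p - a ^ p - p / 2 * a ^ (p-2) * (b^2 - a^2)
        - p * (p-2) / 2 * (b ^ (p-1) / a) * (a - b)^2 := by
    rw [e1, e1']
    rw [show a ^ p * (b ^ p / a ^ p - 1 - p / 2 * ((b/a) ^ 2 - 1)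
          - p * (p - 2) / 2 * (b ^ (p-1) / a ^ (p-1) * (1 - b/a) ^ 2))
        = a ^ p * (b ^ p / a ^ p) - a ^ p - p / 2 * (a ^ p * ((b/a) ^ 2 - 1))
          - p * (p-2) / 2 * (a ^ p / a ^ (p-1) * b ^ (p-1) * (1 - b/a) ^ 2) by ring]
    rw [mul_div_cancel₀ _ hap.ne']
    rw [e2, e3]
    field_simp
  rw [key] at h2
  linarith

/-- E1. -/
lemma my_E1 {p : ℝ} (hp : 2 < p) {a b : ℝ} (ha : 0 ≤ a) (hb : 0 ≤ b) :
    a ^ p + p * a ^ (p-1) * (b - a) + 2 ^ (1-p) * |b - a| ^ p ≤ b ^ p := by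
  have hc1 : (2:ℝ) ^ (1-p) ≤ 1 :=
    Real.rpow_le_one_of_one_le_of_nonpos (by norm_num) (by linarith)
  have hc0 : (0:ℝ) < 2 ^ (1-p) := Real.rpow_pos_of_pos (by norm_num) _
  rcases ha.eq_or_lt with h | h
  · subst h
    rw [Real.zero_rpow (by positivity : p ≠ 0),
        Real.zero_rpow (by intro h; linarith : p - 1 ≠ 0)]
    have : |b - 0| = b := by rw [sub_zero, abs_of_nonneg hb]
    rw [this]
    have hbp : 0 ≤ b ^ p := Real.rpow_nonneg hb p
    nlinarith
  · rcases le_total a b with hab | hab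
    · -- b ≥ a > 0, use L3
      have hx1 : (1:ℝ) ≤ b / a := (one_le_div h).2 hab
      have h1 := my_L3 hp hx1
      have h2 := mul_le_mul_of_nonneg_left h1 (Real.rpow_nonneg ha p : (0:ℝ) ≤ a ^ p)
      have e1 : (b / a) ^ p = b ^ p / a ^ p := Real.div_rpow hb ha p
      have e4 : (b / a - 1) ^ p = (b - a) ^ p / a ^ p := by
        rw [show b / a - 1 = (b - a) / a by field_simp]
        exact Real.div_rpow (by linarith) ha p
      have e3 : a ^ p = a ^ (p-1) * a := my_splitp hp ha
      have hap : (0:ℝ) < a ^ p := Real.rpow_pos_of_pos h p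
      have habs : |b - a| = b - a := abs_of_nonneg (by linarith)
      rw [habs]
      have key1 : a ^ p * ((b/a) ^ p) = b ^ p := by
        rw [e1, mul_div_cancel₀ _ hap.ne']
      have key2 : a ^ p * ((b/a - 1) ^ p) = (b - a) ^ p := by
        rw [e4, mul_div_cancel₀ _ hap.ne']
      have key3 : a ^ p * (p * (b/a - 1)) = p * a ^ (p-1) * (b - a) := by
        rw [e3]; field_simp
      have hba : 0 ≤ (b - a) ^ p := Real.rpow_nonneg (by linarith) p
      have expand : a ^ p * (1 + p * (b/a - 1) + (b/a - 1) ^ p)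
          = a ^ p + p * a ^ (p-1) * (b - a) + (b - a) ^ p := by
        have e5 : a ^ p * (1 + p * (b/a - 1) + (b/a - 1) ^ p)
            = a ^ p + a ^ p * (p * (b/a - 1)) + a ^ p * ((b/a - 1) ^ p) := by ring
        rw [e5, key3, key2]
      rw [expand, key1] at h2
      nlinarith [mul_le_mul_of_nonneg_right hc1 hba]
    · -- b ≤ a, use L4
      have hx0 : 0 ≤ b / a := by positivity
      have hx1 : b / a ≤ 1 := by rw [div_le_one h]; linarith
      have h1 := my_L4 hp hx0 hx1
      have h2 := mul_le_mul_of_nonneg_left h1 (Real.rpow_nonneg ha p : (0:ℝ) ≤ a ^ p)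
      have e1 : (b / a) ^ p = b ^ p / a ^ p := Real.div_rpow hb ha p
      have e2 : a ^ p = a ^ (p-2) * a ^ 2 := my_split2 hp ha
      have e3 : a ^ p = a ^ (p-1) * a := my_splitp hp ha
      have hap : (0:ℝ) < a ^ p := Real.rpow_pos_of_pos h p
      have hA2 : (0:ℝ) < a ^ (p-2) := Real.rpow_pos_of_pos h _
      have habs : |b - a| = a - b := by
        rw [abs_of_nonpos (by linarith : b - a ≤ 0)]; ring
      rw [habs]
      -- a^p * L4 : a^p + p a^{p-1}(b-a) + (p/2) a^{p-2} (a-b)^2 ≤ b^p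
      have key : a ^ p * (1 + p * (b/a - 1) + p / 2 * (1 - b/a) ^ 2)
          = a ^ p + p * a ^ (p-1) * (b - a) + p / 2 * a ^ (p-2) * (a - b)^2 := by
        rw [show a ^ p * (1 + p * (b/a - 1) + p / 2 * (1 - b/a) ^ 2)
            = a ^ p + p * (a ^ p * (b/a - 1)) + p / 2 * (a ^ p * (1 - b/a) ^ 2) by ring]
        rw [show a ^ p * (b/a - 1) = a ^ (p-1) * a * (b/a-1) by rw [← e3],
            show a ^ p * (1 - b/a) ^ 2 = a ^ (p-2) * a ^ 2 * (1-b/a)^2 by rw [← e2]]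
        field_simp
      have keyb : a ^ p * ((b/a) ^ p) = b ^ p := by
        rw [e1, mul_div_cancel₀ _ hap.ne']
      rw [key, keyb] at h2
      -- now need : 2^{1-p} (a-b)^p ≤ (p/2) a^{p-2} (a-b)^2
      have hab2 : (0:ℝ) ≤ a - b := by linarith
      have hsp : (a-b) ^ p = (a-b) ^ (p-2) * (a-b) ^ 2 := my_split2 hp hab2
      have hmono : (a-b) ^ (p-2) ≤ a ^ (p-2) :=
        Real.rpow_le_rpow hab2 (by linarith) (by linarith)
      have h3 : 2 ^ (1-p) * (a-b) ^ p ≤ p / 2 * a ^ (p-2) * (a - b)^2 := by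
        rw [hsp]
        have t1 : 2 ^ (1-p) * ((a-b) ^ (p-2) * (a-b) ^ 2) ≤ 1 * (a ^ (p-2) * (a-b)^2) := by
          apply mul_le_mul hc1 _ (by positivity) (by norm_num)
          exact mul_le_mul_of_nonneg_right hmono (by positivity)
        have t2 : (1:ℝ) * (a ^ (p-2) * (a-b)^2) ≤ p / 2 * a ^ (p-2) * (a - b)^2 := by
          rw [one_mul]
          nlinarith [mul_nonneg hA2.le (sq_nonneg (a-b))]
        linarith
      linarith

/-- E2. -/
lemma my_E2 {p : ℝ} (hp : 2 < p) {a b : ℝ} (ha : 0 ≤ a) (hb : 0 ≤ b) :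
    2 ^ (1-p) * (a + b) ^ p ≤ b ^ p + p * a ^ (p-1) * b + (p - 1) * a ^ p := by
  have hcv := (convexOn_rpow (by linarith : (1:ℝ) ≤ p)).2
    (Set.mem_Ici.2 ha) (Set.mem_Ici.2 hb) (by norm_num : (0:ℝ) ≤ 1/2)
    (by norm_num : (0:ℝ) ≤ 1/2) (by norm_num)
  simp only [smul_eq_mul] at hcv
  have e1 : (a + b) ^ p = 2 ^ p * (1/2 * a + 1/2 * b) ^ p := by
    rw [← Real.mul_rpow (by norm_num) (by positivity)]
    ring_nf
  have e2 : (2:ℝ) ^ (1-p) * 2 ^ p = 2 := by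
    rw [← Real.rpow_add (by norm_num : (0:ℝ) < 2)]
    norm_num
  have h2 : 2 ^ (1-p) * (a + b) ^ p = 2 * (1/2 * a + 1/2 * b) ^ p := by
    rw [e1, ← mul_assoc, e2]
  rw [h2]
  have hpa : 0 ≤ a ^ p := Real.rpow_nonneg ha p
  have hpab : 0 ≤ p * a ^ (p-1) * b := by
    have : (0:ℝ) ≤ a ^ (p-1) := Real.rpow_nonneg ha _
    have hp0 : (0:ℝ) ≤ p := by linarith
    positivity
  nlinarith [hcv]

lemma my_sq_rpow {p : ℝ} (hp : 2 < p) {t : ℝ} (ht : 0 ≤ t) :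
    (t ^ 2 : ℝ) ^ (p/2) = t ^ p := by
  rw [← Real.rpow_natCast t 2, ← Real.rpow_mul ht]
  norm_num
  rw [show (2:ℝ) * (p/2) = p by ring]

/-- Lemma B. -/
lemma my_lemB {p : ℝ} (hp : 2 < p) {a b s : ℝ} (ha : 0 ≤ a) (hb : 0 ≤ b) (hs : 0 ≤ s)
    (h1 : b ≤ a + s) (h2 : a ≤ b + s) (h3 : s ≤ a + b) :
    2 ^ (1-p) * s ^ p ≤ b ^ p - a ^ p - p / 2 * a ^ (p-2) * (b^2 - a^2 - s^2) := by
  set c : ℝ := 2 ^ (1-p) with hc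
  have hc0 : (0:ℝ) < c := Real.rpow_pos_of_pos (by norm_num) _
  set α : ℝ := p / 2 * a ^ (p-2) with hα
  have hα0 : (0:ℝ) ≤ α := by
    have : (0:ℝ) ≤ a ^ (p-2) := Real.rpow_nonneg ha _
    have hp0 : (0:ℝ) ≤ p := by linarith
    positivity
  set M : ℝ := b ^ p - a ^ p - α * (b^2 - a^2) with hM
  -- endpoint bounds
  have hE1 : c * ((a-b)^2) ^ (p/2) - α * (a-b)^2 ≤ M := by
    have e0 : ((a-b)^2 : ℝ) ^ (p/2) = |b - a| ^ p := by
      rw [show (a-b)^2 = |b-a|^2 by rw [sq_abs]; ring]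
      exact my_sq_rpow hp (abs_nonneg _)
    have hE := my_E1 hp ha hb
    have hid : α * (a-b)^2 - α * (b^2 - a^2) = -(p * (a ^ (p-2) * a) * (b-a)) := by
      rw [hα]; ring
    rw [← my_split1 hp ha] at hid
    rw [hM, e0]
    linarith
  have hE2 : c * ((a+b)^2) ^ (p/2) - α * (a+b)^2 ≤ M := by
    have e0 : ((a+b)^2 : ℝ) ^ (p/2) = (a + b) ^ p := my_sq_rpow hp (by linarith)
    have hE := my_E2 hp ha hb
    have hid : α * (a+b)^2 - α * (b^2 - a^2) = p * (a ^ (p-2) * a) * a + p * (a ^ (p-2) * a) * b := by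
      rw [hα]; ring
    rw [← my_split1 hp ha] at hid
    have hid2 : p * a ^ (p-1) * a = p * a ^ p := by
      rw [my_splitp hp ha]; ring
    rw [hM, e0]
    nlinarith [hE, hid, hid2]
  -- s^2 lies between the endpoints
  have hu1 : (a-b)^2 ≤ s^2 := sq_le_sq' (by linarith) (by linarith)
  have hu2 : s^2 ≤ (a+b)^2 := by nlinarith
  -- convex combination
  have hgoal : c * (s^2) ^ (p/2) - α * s^2 ≤ M := by
    rcases eq_or_lt_of_le (hu1.trans hu2) with heq | hlt
    · have hs2 : s^2 = (a-b)^2 := le_antisymm (by rw [← heq] at hu2; exact hu2) hu1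
      rw [hs2]; exact hE1
    · set θ : ℝ := ((a+b)^2 - s^2) / ((a+b)^2 - (a-b)^2) with hθ
      have hden : (0:ℝ) < (a+b)^2 - (a-b)^2 := by linarith
      have hθ0 : 0 ≤ θ := by apply div_nonneg (by linarith) hden.le
      have hθ1 : θ ≤ 1 := by
        rw [div_le_one hden]; linarith
      have hcomb : s^2 = θ * (a-b)^2 + (1-θ) * (a+b)^2 := by
        rw [hθ]
        field_simp
        ring
      have hcv := (convexOn_rpow (show (1:ℝ) ≤ p/2 by linarith)).2
        (Set.mem_Ici.2 (sq_nonneg (a-b))) (Set.mem_Ici.2 (sq_nonneg (a+b)))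
        hθ0 (by linarith : 0 ≤ 1 - θ) (by ring)
      simp only [smul_eq_mul] at hcv
      rw [← hcomb] at hcv
      have t1 := mul_le_mul_of_nonneg_left hE1 hθ0
      have t2 := mul_le_mul_of_nonneg_left hE2 (by linarith : (0:ℝ) ≤ 1 - θ)
      have t3 := mul_le_mul_of_nonneg_left hcv hc0.le
      nlinarith [t1, t2, t3, hcomb]
  have es : (s^2 : ℝ) ^ (p/2) = s ^ p := my_sq_rpow hp hs
  rw [es] at hgoal
  simp only [hM, hα, hc] at hgoal ⊢
  linarith

/-- Final scalar combination. -/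
lemma my_final {p κ : ℝ} (hp : 2 < p) (hκ : 0 < κ) {a b s t W : ℝ}
    (ha : 0 ≤ a) (hs : 0 ≤ s) (hW : 0 ≤ W)
    (hb2 : b^2 = a^2 + 2*t + s^2)
    (hA : p / 2 * a ^ (p-2) * (b^2 - a^2) + p * (p-2) / 2 * W * (a - b)^2 ≤ b ^ p - a ^ p)
    (hB : 2 ^ (1-p) * s ^ p ≤ b ^ p - a ^ p - p / 2 * a ^ (p-2) * (b^2 - a^2 - s^2)) :
    a ^ p + p * a ^ (p-2) * t
      + (1 - κ) / 2 * (p * a ^ (p-2) * s^2 + p * (p-2) * W * (a - b)^2)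
      + (min κ 1 * 2 ^ (1-p)) * s ^ p ≤ b ^ p := by
  have hA2 : (0:ℝ) ≤ a ^ (p-2) := Real.rpow_nonneg ha _
  have hp0 : (0:ℝ) < p := by linarith
  have hp2 : (0:ℝ) < p - 2 := by linarith
  have hS : 0 ≤ p * a ^ (p-2) * s^2 + p * (p-2) * W * (a - b)^2 := by positivity
  have hμ0 : 0 < min κ 1 := lt_min hκ one_pos
  have hμ1 : min κ 1 ≤ 1 := min_le_right _ _
  have hμκ : min κ 1 ≤ κ := min_le_left _ _
  have hAt : p * a ^ (p-2) * (2*t) = p * a ^ (p-2) * (b^2 - a^2 - s^2) := by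
    rw [show 2*t = b^2 - a^2 - s^2 by linarith]
  have hA' : a ^ p + p * a ^ (p-2) * t
      + (p * a ^ (p-2) * s^2 + p * (p-2) * W * (a - b)^2) / 2 ≤ b ^ p := by
    nlinarith [hA, hAt]
  have hB' : a ^ p + p * a ^ (p-2) * t + 2 ^ (1-p) * s ^ p ≤ b ^ p := by
    nlinarith [hB, hAt]
  have c1 := mul_le_mul_of_nonneg_left hA' (by linarith : (0:ℝ) ≤ 1 - min κ 1)
  have c2 := mul_le_mul_of_nonneg_left hB' hμ0.le
  have c3 : (1 - κ) / 2 * (p * a ^ (p-2) * s^2 + p * (p-2) * W * (a - b)^2)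
      ≤ (1 - min κ 1) / 2 * (p * a ^ (p-2) * s^2 + p * (p-2) * W * (a - b)^2) := by
    apply mul_le_mul_of_nonneg_right _ hS
    linarith
  nlinarith [c1, c2, c3]

theorem taylor_lower_bound_norm_rpow (p κ : ℝ) (hp : 2 < p) (hκ : 0 < κ) :
    ∃ c₀ > (0:ℝ), ∀ (n : ℕ) (y z : EuclideanSpace ℝ (Fin n)),
      ‖y‖ ^ p + p * ‖y‖ ^ (p - 2) * (inner ℝ y z : ℝ)
        + (1 - κ) / 2 *
          (p * ‖y‖ ^ (p - 2) * ‖z‖ ^ 2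
            + p * (p - 2) *
              ‖if ‖y‖ ≤ ‖y + z‖ then y
                else (‖y + z‖ / ‖y‖) ^ (1/(p-2)) • (y + z)‖ ^ (p - 2)
              * (‖y‖ - ‖y + z‖) ^ 2)
        + c₀ * ‖z‖ ^ p ≤ ‖y + z‖ ^ p := by
  refine ⟨min κ 1 * 2 ^ (1-p), by positivity, ?_⟩
  intro n y z
  have ha : (0:ℝ) ≤ ‖y‖ := norm_nonneg y
  have hb : (0:ℝ) ≤ ‖y + z‖ := norm_nonneg _
  have hs : (0:ℝ) ≤ ‖z‖ := norm_nonneg z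
  have hb2 : ‖y + z‖^2 = ‖y‖^2 + 2 * (inner ℝ y z : ℝ) + ‖z‖^2 := norm_add_sq_real y z
  have htri1 : ‖y + z‖ ≤ ‖y‖ + ‖z‖ := norm_add_le y z
  have htri2 : ‖y‖ ≤ ‖y + z‖ + ‖z‖ := by
    calc ‖y‖ = ‖(y + z) - z‖ := by rw [add_sub_cancel_right]
    _ ≤ ‖y + z‖ + ‖z‖ := norm_sub_le _ _
  have htri3 : ‖z‖ ≤ ‖y‖ + ‖y + z‖ := by
    calc ‖z‖ = ‖(y + z) - y‖ := by rw [add_sub_cancel_left]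
    _ ≤ ‖y + z‖ + ‖y‖ := norm_sub_le _ _
    _ = ‖y‖ + ‖y + z‖ := by ring
  have hB := my_lemB hp ha hb hs htri1 htri2 htri3
  by_cases hab : ‖y‖ ≤ ‖y + z‖
  · rw [if_pos hab]
    exact my_final hp hκ ha hs (Real.rpow_nonneg ha _) hb2
      (my_lemA_le hp ha hab) hB
  · rw [if_neg hab]
    push_neg at hab
    have ha0 : (0:ℝ) < ‖y‖ := hb.trans_lt hab
    have hdiv : (0:ℝ) ≤ ‖y + z‖ / ‖y‖ := by positivity
    have hrp : (0:ℝ) ≤ (‖y + z‖ / ‖y‖) ^ (1/(p-2)) := Real.rpow_nonneg hdiv _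
    have hnorm : ‖(‖y + z‖ / ‖y‖) ^ (1/(p-2)) • (y + z)‖
        = (‖y + z‖ / ‖y‖) ^ (1/(p-2)) * ‖y + z‖ := by
      rw [norm_smul, Real.norm_eq_abs, abs_of_nonneg hrp]
    have hW : ‖(‖y + z‖ / ‖y‖) ^ (1/(p-2)) • (y + z)‖ ^ (p-2)
        = ‖y + z‖ ^ (p-1) / ‖y‖ := by
      rw [hnorm, Real.mul_rpow hrp hb, ← Real.rpow_mul hdiv,
        one_div_mul_cancel (by linarith : p - 2 ≠ 0), Real.rpow_one,
        my_split1 hp hb]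
      field_simp
    rw [hW]
    exact my_final hp hκ ha hs (by positivity) hb2
      (my_lemA_gt hp hb hab) hB
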